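/- Let r = b − Ax with r ≠ 0 and define Ê = −(r rᵀ A)/‖r‖₂². Then (A + Ê)ᵀ r = 0, i.e., (A + Ê)ᵀ(A + Ê)x = (A + Ê)ᵀb, so x is an exact least squares solution of the perturbed problem with matrix A + Ê. -/

import Mathlib

open Matrix

/-- The Euclidean (ℓ₂) norm of a real vector. -/
noncomputable def enorm₂ {m : ℕ} (v : Fin m → ℝ) : ℝ := ‖(WithLp.equiv 2 (Fin m → ℝ)).symm v‖

lemma enorm_sq {m : ℕ} (v : Fin m → ℝ) : enorm₂ v ^ 2 = v ⬝ᵥ v := by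
  rw [enorm₂, EuclideanSpace.norm_eq, Real.sq_sqrt (by positivity)]
  simp [dotProduct, sq]

lemma dot_ne {m : ℕ} (v : Fin m → ℝ) (h : v ≠ 0) : v ⬝ᵥ v ≠ 0 := by
  intro h0
  apply h
  ext i
  have := Finset.sum_eq_zero_iff_of_nonneg (fun j _ => mul_self_nonneg (v j)) |>.mp h0 i (Finset.mem_univ i)
  simpa using mul_self_eq_zero.mp this

lemma vmv_mulVec {p q : ℕ} (w : Fin p → ℝ) (v u : Fin q → ℝ) :
    (vecMulVec w v).mulVec u = (v ⬝ᵥ u) • w := by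
  ext i
  simp [vecMulVec_apply, mulVec, dotProduct, Finset.mul_sum, Finset.sum_mul, mul_assoc, mul_comm, mul_left_comm]

lemma vmv_transpose {p q : ℕ} (w : Fin p → ℝ) (v : Fin q → ℝ) :
    (vecMulVec w v)ᵀ = vecMulVec v w := by
  ext i j
  simp [vecMulVec_apply, mul_comm]

/-- For `r = b − Ax ≠ 0` and `Ê = −r rᵀ A/‖r‖₂²`, one has `(A + Ê)ᵀr = 0`, hence
`(A + Ê)ᵀ(A + Ê)x = (A + Ê)ᵀb`: `x` is an exact least squares solution of the
perturbed problem. -/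
theorem stmt14 (m n : ℕ) (A : Matrix (Fin m) (Fin n) ℝ) (b : Fin m → ℝ)
    (x : Fin n → ℝ) (r : Fin m → ℝ) (hr : r = b - A.mulVec x) (hr0 : r ≠ 0)
    (E : Matrix (Fin m) (Fin n) ℝ)
    (hE : E = -((enorm₂ r ^ 2)⁻¹ • Matrix.vecMulVec r (A.vecMul r))) :
    (A + E)ᵀ.mulVec r = 0 ∧
      ((A + E)ᵀ * (A + E)).mulVec x = (A + E)ᵀ.mulVec b := by
  have hd : r ⬝ᵥ r ≠ 0 := dot_ne r hr0
  rw [enorm_sq] at hE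
  have h1 : (A + E)ᵀ.mulVec r = 0 := by
    rw [transpose_add, Matrix.add_mulVec, hE, transpose_neg, transpose_smul, vmv_transpose,
      Matrix.neg_mulVec, Matrix.smul_mulVec, vmv_mulVec, Matrix.mulVec_transpose,
      smul_smul, inv_mul_cancel₀ hd, one_smul, add_neg_cancel]
  refine ⟨h1, ?_⟩
  have hEx : E.mulVec x = (-((r ⬝ᵥ r)⁻¹ * (A.vecMul r ⬝ᵥ x))) • r := by
    rw [hE, Matrix.neg_mulVec, Matrix.smul_mulVec, vmv_mulVec, smul_smul, neg_smul]
  have key : (A + E).mulVec x - b = ((-((r ⬝ᵥ r)⁻¹ * (A.vecMul r ⬝ᵥ x))) - 1) • r := by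
    rw [Matrix.add_mulVec, hEx, hr]
    ext i; simp; ring
  have h2 : ((A + E)ᵀ * (A + E)).mulVec x - (A + E)ᵀ.mulVec b
      = (A + E)ᵀ.mulVec ((A + E).mulVec x - b) := by
    rw [Matrix.mulVec_sub, ← Matrix.mulVec_mulVec]
  rw [← sub_eq_zero, h2, key, Matrix.mulVec_smul, h1, smul_zero]
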